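/- arXiv:1205.2992 — 4 statements merged into one kernel-verified Lean document; each statement's English description precedes it below -/
import Mathlib

section
/- For every q = (x_0, …, x_k) ∈ C^k(m), let D_k(q) = span{v_r(q) : r = 1, …, m+1} where v_r(q) = (x_k^r − x_{k−1}^r)·Y_k(q) + e_r^{(k)}. Let L_k(q) = { v ∈ (ℝ^{m+1})^{k+1} : v is supported in the k-th component and its k-th component is orthogonal to x_k − x_{k−1} }, and let X_k(q) = Y_k(q) + V_k(q), where V_k(q) is the tuple whose k-th component is x_k − x_{k−1} and whose other components are 0. Then D_k(q) is the direct sum of L_k(q) and the line spanned by X_k(q): D_k(q) = L_k(q) ⊕ ℝ·X_k(q). -/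
noncomputable section

open scoped RealInnerProductSpace

open Fin.NatCast

namespace ArticulatedArm

/-- `ℝ^{m+1}` with the Euclidean structure. -/
abbrev Vec (m : ℕ) : Type := EuclideanSpace ℝ (Fin (m + 1))

/-- `(ℝ^{m+1})^{k+1}` with the Euclidean (product) structure. -/
abbrev Tup (m k : ℕ) : Type := PiLp 2 (fun _ : Fin (k + 1) => Vec m)

/-- The segment vector `x_{i+1} - x_i`. -/
def seg (m k : ℕ) (x : Tup m k) (i : ℕ) : Vec m :=
  x ((i + 1 : ℕ) : Fin (k + 1)) - x ((i : ℕ) : Fin (k + 1))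

/-- The configuration space `C^k(m)`. -/
def Conf (m k : ℕ) : Set (Tup m k) := {x | ∀ i, i < k → ‖seg m k x i‖ = 1}

/-- `A_{i,j}(x) = ⟨x_{i+1} - x_i, x_{j+1} - x_j⟩`. -/
def AA (m k : ℕ) (x : Tup m k) (i j : ℕ) : ℝ := ⟪seg m k x i, seg m k x j⟫

/-- `A_i(x) = A_{i,i-1}(x)`. -/
def Acoef (m k : ℕ) (x : Tup m k) (i : ℕ) : ℝ := AA m k x i (i - 1)

/-- `Z_i(x)`: the tuple whose `i`-th component is `x_{i+1} - x_i` and the others `0`. -/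
def Zt (m k : ℕ) (x : Tup m k) (i : ℕ) : Tup m k :=
  WithLp.toLp 2 (fun l => if (l : ℕ) = i then seg m k x i else 0)

/-- `N_i(x)`: the tuple with `i`-th component `-(x_{i+1} - x_i)`, `(i+1)`-th component
`x_{i+1} - x_i`, and the others `0`. -/
def Nt (m k : ℕ) (x : Tup m k) (i : ℕ) : Tup m k :=
  WithLp.toLp 2 (fun l => if (l : ℕ) = i then -(seg m k x i)
    else if (l : ℕ) = i + 1 then seg m k x i else 0)

/-- `Y_n(x) = Σ_{i=0}^{n-1} (Π_{j=i+1}^{n-1} A_j(x)) Z_i(x)`. -/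
def Yt (m k : ℕ) (x : Tup m k) (n : ℕ) : Tup m k :=
  ∑ i ∈ Finset.range n, (∏ j ∈ Finset.Ico (i + 1) n, Acoef m k x j) • Zt m k x i

/-- `Ψ_i(x) = ‖x_{i+1} - x_i‖² - 1`. -/
def Psi (m k : ℕ) (i : ℕ) (x : Tup m k) : ℝ := ‖seg m k x i‖ ^ 2 - 1

/-- `e_r^{(i)}`: the tuple whose `i`-th component is the `r`-th standard basis
vector of `ℝ^{m+1}` and whose other components are `0`. -/
def et (m k : ℕ) (i : ℕ) (r : Fin (m + 1)) : Tup m k :=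
  WithLp.toLp 2 (fun l => if (l : ℕ) = i then EuclideanSpace.single r (1 : ℝ) else 0)

/-- at every `q ∈ C^k(m)`, `D_k(q) = span{v_r(q)}` is the direct sum of the
vertical subspace `L_k(q)` and the line spanned by `X_k(q) = Y_k(q) + V_k(q)`. -/
theorem statement4 (m k : ℕ) (hm : 2 ≤ m) (hk : 1 ≤ k)
    (q : Tup m k) (hq : q ∈ Conf m k) :
    let vr : Fin (m + 1) → Tup m k :=
      fun r => (seg m k q (k - 1) r) • Yt m k q k + et m k k r
    let Dk : Set (Tup m k) := (Submodule.span ℝ (Set.range vr) : Set (Tup m k))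
    let Lk : Set (Tup m k) := {v | (∀ l : Fin (k + 1), (l : ℕ) ≠ k → v l = 0) ∧
      ⟪v ((k : ℕ) : Fin (k + 1)), seg m k q (k - 1)⟫ = 0}
    let Vk : Tup m k := WithLp.toLp 2 (fun l => if (l : ℕ) = k then seg m k q (k - 1) else 0)
    let Xk : Tup m k := Yt m k q k + Vk
    (∀ w : Tup m k, w ∈ Dk ↔ ∃ v ∈ Lk, ∃ c : ℝ, w = v + c • Xk) ∧
    (∀ v ∈ Lk, ∀ c : ℝ, v + c • Xk = 0 → v = 0 ∧ c = 0) := by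

  intro vr Dk Lk Vk Xk
  have hkfin : (((k : ℕ) : Fin (k+1)) : ℕ) = k := Fin.val_cast_of_lt (Nat.lt_succ_self k)
  have hk1 : k - 1 < k := Nat.sub_lt hk one_pos
  set u : Vec m := seg m k q (k-1) with hu_def
  have huu : ⟪u, u⟫ = 1 := by
    rw [real_inner_self_eq_norm_sq, hq (k-1) hk1]; norm_num
  have hY : ∀ l : Fin (k+1), (l : ℕ) = k → Yt m k q k l = 0 := by
    intro l hl
    show (∑ i ∈ Finset.range k, (∏ j ∈ Finset.Ico (i + 1) k, Acoef m k q j) • Zt m k q i) l = 0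
    rw [WithLp.ofLp_sum, Finset.sum_apply]
    refine Finset.sum_eq_zero fun i hi => ?_
    have hz : Zt m k q i l = 0 := by
      have : (l : ℕ) ≠ i := by rw [hl]; exact fun h => absurd (Finset.mem_range.mp hi) (by omega)
      simp [Zt, this]
    rw [PiLp.smul_apply, hz, smul_zero]
  have hvr : ∀ (r : Fin (m+1)) (l : Fin (k+1)),
      vr r l = (u r) • Yt m k q k l + (if (l : ℕ) = k then EuclideanSpace.single r (1:ℝ) else 0) := by
    intro r l
    show ((u r) • Yt m k q k + et m k k r) l = _
    rw [PiLp.add_apply, PiLp.smul_apply]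
    rfl
  have hXk : ∀ l : Fin (k+1), Xk l = Yt m k q k l + (if (l : ℕ) = k then u else 0) :=
    fun l => rfl
  have hsmul : ∀ (a : ℝ) (x : Tup m k) (l : Fin (k+1)), (a • x) l = a • x l := fun _ _ _ => rfl
  have hadd : ∀ (x y : Tup m k) (l : Fin (k+1)), (x + y) l = x l + y l := fun _ _ _ => rfl
  have hsub : ∀ (x y : Tup m k) (l : Fin (k+1)), (x - y) l = x l - y l := fun _ _ _ => rfl
  have hinner : ∀ a b : Vec m, ⟪a, b⟫ = ∑ j : Fin (m+1), a j * b j := by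
    intro a b
    simp [PiLp.inner_apply, RCLike.inner_apply]
    exact Finset.sum_congr rfl fun _ _ => mul_comm _ _
  constructor
  · intro w
    constructor
    · intro hw
      obtain ⟨c, hc⟩ := (Submodule.mem_span_range_iff_exists_fun ℝ).mp hw
      set s : ℝ := ∑ r : Fin (m+1), c r * u r with hs_def
      refine ⟨w - s • Xk, ?_, s, by abel⟩
      have cv : Vec m := WithLp.toLp 2 (fun j => c j)
      have hwl : ∀ l : Fin (k+1), w l = s • Yt m k q k l +
          (if (l : ℕ) = k then (show Vec m from WithLp.toLp 2 (fun j => c j)) else 0) := by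
        intro l
        rw [← hc, WithLp.ofLp_sum, Finset.sum_apply]
        simp only [hsmul, hvr]
        rw [Finset.sum_congr rfl (fun r _ => smul_add (c r) _ _), Finset.sum_add_distrib]
        congr 1
        · rw [Finset.sum_congr rfl (fun r _ => (smul_smul (c r) (u r) _))]
          rw [← Finset.sum_smul]
        · by_cases hl : (l : ℕ) = k
          · simp only [hl, if_true]
            apply WithLp.ofLp_injective; funext j
            rw [WithLp.ofLp_sum, Finset.sum_apply]
            simp [EuclideanSpace.single_apply, Finset.sum_ite_eq', smul_ite]
          · simp [hl]
      constructor
      · intro l hl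
        rw [hsub, hwl l, hsmul, hXk l, if_neg hl, if_neg hl]
        simp [smul_add]
      · rw [hsub, hwl _, hsmul, hXk, hY _ hkfin, if_pos hkfin, if_pos hkfin]
        simp only [smul_zero, zero_add]
        rw [inner_sub_left, inner_smul_left, hinner, hinner]
        simp only [conj_trivial]
        have h1 : ∑ j : Fin (m+1), (show Vec m from WithLp.toLp 2 (fun i => c i)) j * u j = s := rfl
        have h2 : ∑ j : Fin (m+1), u j * u j = 1 := by rw [← hinner]; exact huu
        rw [h1, h2, mul_one, sub_self]
    · rintro ⟨v, ⟨hv1, hv2⟩, c, rfl⟩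
      apply (Submodule.mem_span_range_iff_exists_fun ℝ).mpr
      refine ⟨fun r => v ((k : ℕ) : Fin (k+1)) r + c * u r, ?_⟩
      have hsum : ∑ r : Fin (m+1), (v ((k : ℕ) : Fin (k+1)) r + c * u r) * u r = c := by
        have heq : (∑ r : Fin (m+1), (v ((k : ℕ) : Fin (k+1)) r + c * u r) * u r)
            = ⟪v ((k : ℕ) : Fin (k+1)) + c • u, u⟫ := by
          rw [hinner]
          refine Finset.sum_congr rfl fun r _ => ?_
          congr 1
        rw [heq, inner_add_left, inner_smul_left, hv2, huu]
        simp
      apply WithLp.ofLp_injective; funext l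
      rw [WithLp.ofLp_sum, Finset.sum_apply, hadd, hsmul, hXk l]
      simp only [hsmul, hvr]
      rw [Finset.sum_congr rfl (fun r _ => smul_add _ _ _), Finset.sum_add_distrib]
      rw [Finset.sum_congr rfl (fun r _ => (smul_smul _ (u r) _)), ← Finset.sum_smul, hsum]
      by_cases hl : (l : ℕ) = k
      · have hlk : l = ((k : ℕ) : Fin (k+1)) := by
          apply Fin.ext; rw [hkfin, hl]
        simp only [hl, if_true, hY l hl, smul_zero, zero_add]
        apply WithLp.ofLp_injective; funext j
        rw [WithLp.ofLp_sum, Finset.sum_apply]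
        simp only [PiLp.smul_apply, EuclideanSpace.single_apply, smul_ite, smul_eq_mul,
          mul_one, smul_zero, mul_ite, mul_zero]
        rw [Finset.sum_ite_eq Finset.univ j]
        simp only [Finset.mem_univ, if_true]
        show _ = (v l + c • u) j
        rw [PiLp.add_apply, PiLp.smul_apply, hlk]
        rfl
      · simp only [hl, if_false, smul_zero, Finset.sum_const_zero, add_zero, hv1 l hl, zero_add]
  · rintro v ⟨hv1, hv2⟩ c hvc
    have hck : v ((k : ℕ) : Fin (k+1)) + c • u = 0 := by
      have h : (v + c • Xk) ((k : ℕ) : Fin (k+1)) = (0 : Tup m k) ((k : ℕ) : Fin (k+1)) := by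
        rw [hvc]
      rw [hadd, hsmul, hXk, hY _ hkfin, if_pos hkfin, zero_add] at h
      exact h
    have hc0 : c = 0 := by
      have h : ⟪v ((k : ℕ) : Fin (k+1)) + c • u, u⟫ = ⟪(0 : Vec m), u⟫ := by rw [hck]
      rw [inner_add_left, inner_smul_left, hv2, huu, inner_zero_left] at h
      simpa using h
    refine ⟨?_, hc0⟩
    rw [hc0, zero_smul, add_zero] at hvc
    exact hvc


end ArticulatedArm
end
end

section
/- Fix integers h ≥ 1 and l ≥ 0, and set k = h + l + 1. For 0 ≤ j ≤ l define φ̄_j : (ℝ^{m+1})^{k+1} → ℝ by φ̄_j(x) = ⟨x_{h+j+1} − x_{h+j}, x_{h+j} − x_{h−1}⟩ (so φ̄_0 = A_h). At every point q ∈ C^k(m) satisfying φ̄_j(q) = 0 for all 0 ≤ j ≤ l, the map (ℝ^{m+1})^{k+1} → ℝ^{k + l + 1} whose components are Ψ_0, …, Ψ_{k−1}, φ̄_0, …, φ̄_l has surjective Fréchet derivative at q. (This expresses that the class C_{R^h V T^l} is an analytic submanifold of C^k(m) of codimension l + 1.) -/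
noncomputable section

open scoped RealInnerProductSpace

open Fin.NatCast

namespace ArticulatedArm

-- auxiliary
def prj (m k : ℕ) (n : ℕ) : Tup m k →L[ℝ] Vec m :=
  PiLp.proj 2 (fun _ : Fin (k + 1) => Vec m) ((n : ℕ) : Fin (k + 1))

lemma prj_apply (m k n : ℕ) (x : Tup m k) : prj m k n x = x ((n : ℕ) : Fin (k + 1)) := rfl

def sgC (m k : ℕ) (n : ℕ) : Tup m k →L[ℝ] Vec m := prj m k (n + 1) - prj m k n

lemma sgC_apply (m k n : ℕ) (x : Tup m k) :
    sgC m k n x = x ((n + 1 : ℕ) : Fin (k + 1)) - x ((n : ℕ) : Fin (k + 1)) := rfl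

lemma hasFDerivAt_seg (m k n : ℕ) (q : Tup m k) :
    HasFDerivAt (fun x : Tup m k => seg m k x n) (sgC m k n) q := by
  exact ((prj m k (n + 1)).hasFDerivAt (x := q)).sub ((prj m k n).hasFDerivAt (x := q))

def dpsi (m k : ℕ) (q : Tup m k) (i : ℕ) : Tup m k →L[ℝ] ℝ :=
  2 • ((innerSL ℝ (seg m k q i)).comp (sgC m k i))

lemma hasFDerivAt_psi (m k : ℕ) (q : Tup m k) (i : ℕ) :
    HasFDerivAt (fun x => Psi m k i x) (dpsi m k q i) q := by
  exact ((hasFDerivAt_seg m k i q).norm_sq).sub_const 1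

def Svec (m k h : ℕ) (q : Tup m k) (j : ℕ) : Vec m :=
  q ((h + j : ℕ) : Fin (k + 1)) - q ((h - 1 : ℕ) : Fin (k + 1))

def Ccl (m k h j : ℕ) : Tup m k →L[ℝ] Vec m := prj m k (h + j) - prj m k (h - 1)

def dphi (m k h : ℕ) (q : Tup m k) (j : ℕ) : Tup m k →L[ℝ] ℝ :=
  (innerSL ℝ (Svec m k h q j)).comp (sgC m k (h + j)) +
    (innerSL ℝ (seg m k q (h + j))).comp (Ccl m k h j)

lemma hasFDerivAt_phi (m k h : ℕ) (q : Tup m k) (j : ℕ) :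
    HasFDerivAt (fun x : Tup m k =>
      (⟪x ((h + j + 1 : ℕ) : Fin (k + 1)) - x ((h + j : ℕ) : Fin (k + 1)),
        x ((h + j : ℕ) : Fin (k + 1)) - x ((h - 1 : ℕ) : Fin (k + 1))⟫ : ℝ)) (dphi m k h q j) q := by
  have hB := hasFDerivAt_seg m k (h + j) q
  have hC := ((prj m k (h + j)).hasFDerivAt (x := q)).sub ((prj m k (h - 1)).hasFDerivAt (x := q))
  have hI := hB.inner ℝ hC
  refine HasFDerivAt.congr_fderiv hI ?_
  ext v
  show (⟪seg m k q (h+j), prj m k (h+j) v - prj m k (h-1) v⟫:ℝ) + ⟪sgC m k (h+j) v, Svec m k h q j⟫ = dphi m k h q j v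
  rw [show dphi m k h q j v = ⟪Svec m k h q j, sgC m k (h+j) v⟫ + ⟪seg m k q (h+j), prj m k (h+j) v - prj m k (h-1) v⟫ from rfl,
    real_inner_comm (sgC m k (h+j) v) (Svec m k h q j)]
  ring


def delta (m k : ℕ) (p : ℕ) (w : Vec m) : Tup m k :=
  WithLp.toLp 2 (fun i => if (i : ℕ) = p then w else 0)

lemma delta_apply (m k p n : ℕ) (hn : n < k + 1) (w : Vec m) :
    delta m k p w ((n : ℕ) : Fin (k + 1)) = if n = p then w else 0 := by
  show (if (((n : ℕ) : Fin (k + 1)) : ℕ) = p then w else 0) = _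
  rw [Fin.val_cast_of_lt hn]

lemma dpsi_delta (m k : ℕ) (q : Tup m k) (i p : ℕ) (hik : i + 1 < k + 1) (w : Vec m) :
    dpsi m k q i (delta m k p w) =
      (if i + 1 = p then 2 * ⟪seg m k q i, w⟫ else 0) -
        (if i = p then 2 * ⟪seg m k q i, w⟫ else 0) := by
  have e1 : dpsi m k q i (delta m k p w) =
      (2 : ℕ) • (⟪seg m k q i, sgC m k i (delta m k p w)⟫ : ℝ) := rfl
  rw [e1, nsmul_eq_mul, Nat.cast_ofNat, sgC_apply, delta_apply m k p (i + 1) hik,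
    delta_apply m k p i (by omega), inner_sub_right]
  split_ifs <;> (try simp only [inner_zero_right]) <;> ring

lemma dphi_delta (m k h : ℕ) (q : Tup m k) (j p : ℕ) (h1 : h + j + 1 < k + 1) (w : Vec m) :
    dphi m k h q j (delta m k p w) =
      ((if h + j + 1 = p then ⟪Svec m k h q j, w⟫ else 0) -
        (if h + j = p then ⟪Svec m k h q j, w⟫ else 0)) +
      ((if h + j = p then ⟪seg m k q (h + j), w⟫ else 0) -
        (if h - 1 = p then ⟪seg m k q (h + j), w⟫ else 0)) := by
  have e1 : dphi m k h q j (delta m k p w) =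
      (⟪Svec m k h q j, sgC m k (h + j) (delta m k p w)⟫ : ℝ) +
      ⟪seg m k q (h + j), delta m k p w ((h + j : ℕ) : Fin (k + 1)) -
        delta m k p w ((h - 1 : ℕ) : Fin (k + 1))⟫ := rfl
  rw [e1, sgC_apply, delta_apply m k p (h + j + 1) h1, delta_apply m k p (h + j) (by omega),
    delta_apply m k p (h - 1) (by omega), inner_sub_right, inner_sub_right]
  split_ifs <;> (try simp only [inner_zero_right]) <;> ring

def eps (k l : ℕ) (a : ℕ) (c : ℝ) : (Fin k → ℝ) × (Fin (l + 1) → ℝ) :=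
  ((fun i => if (i : ℕ) = a then c else 0), 0)

def eph (k l : ℕ) (b : ℕ) (c : ℝ) : (Fin k → ℝ) × (Fin (l + 1) → ℝ) :=
  (0, fun j => if (j : ℕ) = b then c else 0)

lemma eps_smul (k l a : ℕ) (c : ℝ) : eps k l a c = c • eps k l a 1 := by
  refine Prod.ext (funext fun i => ?_) (by simp [eps])
  simp [eps, mul_ite]

lemma eph_smul (k l b : ℕ) (c : ℝ) : eph k l b c = c • eph k l b 1 := by
  refine Prod.ext (by simp [eph]) (funext fun j => ?_)
  simp [eph, mul_ite]

lemma eps_extract {k l a : ℕ} {c : ℝ} {R : Submodule ℝ ((Fin k → ℝ) × (Fin (l + 1) → ℝ))}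
    (hc : c ≠ 0) (hm : eps k l a c ∈ R) : eps k l a 1 ∈ R := by
  have h1 : eps k l a 1 = c⁻¹ • eps k l a c := by
    rw [eps_smul k l a c, smul_smul, inv_mul_cancel₀ hc, one_smul]
  rw [h1]; exact R.smul_mem _ hm

lemma eph_extract {k l b : ℕ} {c : ℝ} {R : Submodule ℝ ((Fin k → ℝ) × (Fin (l + 1) → ℝ))}
    (hc : c ≠ 0) (hm : eph k l b c ∈ R) : eph k l b 1 ∈ R := by
  have h1 : eph k l b 1 = c⁻¹ • eph k l b c := by
    rw [eph_smul k l b c, smul_smul, inv_mul_cancel₀ hc, one_smul]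
  rw [h1]; exact R.smul_mem _ hm

lemma mem_of_add2 {M : Type*} [AddCommGroup M] [Module ℝ M] {R : Submodule ℝ M} {X Y : M}
    (hs : X + Y ∈ R) (hY : Y ∈ R) : X ∈ R := by
  simpa using R.sub_mem hs hY

lemma mem_of_add3 {M : Type*} [AddCommGroup M] [Module ℝ M] {R : Submodule ℝ M} {X Y Z : M}
    (hs : X + Y + Z ∈ R) (hY : Y ∈ R) (hZ : Z ∈ R) : X ∈ R :=
  mem_of_add2 (mem_of_add2 hs hZ) hY


set_option maxHeartbeats 2000000 in
/-- with `k = h + l + 1` and `φ̄_j(x) = ⟨x_{h+j+1} - x_{h+j}, x_{h+j} - x_{h-1}⟩`,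
at every `q ∈ C^k(m)` with `φ̄_j(q) = 0` for `0 ≤ j ≤ l`, the map with components
`Ψ_0,…,Ψ_{k-1}, φ̄_0,…,φ̄_l` has surjective Fréchet derivative at `q`. -/
theorem statement9 (m h l : ℕ) (hm : 2 ≤ m) (hh : 1 ≤ h) :
    let k := h + l + 1
    let phibar : ℕ → Tup m k → ℝ := fun j x =>
      ⟪x ((h + j + 1 : ℕ) : Fin (k + 1)) - x ((h + j : ℕ) : Fin (k + 1)),
        x ((h + j : ℕ) : Fin (k + 1)) - x ((h - 1 : ℕ) : Fin (k + 1))⟫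
    ∀ q ∈ Conf m k, (∀ j, j ≤ l → phibar j q = 0) →
      ∃ D : Tup m k →L[ℝ] ((Fin k → ℝ) × (Fin (l + 1) → ℝ)),
        HasFDerivAt (fun x : Tup m k =>
          ((fun i : Fin k => Psi m k (i : ℕ) x),
           (fun j : Fin (l + 1) => phibar (j : ℕ) x))) D q ∧
        Function.Surjective D := by
  intro k phibar q hq hphi
  have hk : k = h + l + 1 := rfl
  -- basic geometric facts at q
  have horth : ∀ j, j ≤ l → (⟪seg m k q (h + j), Svec m k h q j⟫ : ℝ) = 0 := by
    intro j hj; exact hphi j hj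
  have hu1 : ∀ i, i < k → (⟪seg m k q i, seg m k q i⟫ : ℝ) = 1 := by
    intro i hi
    rw [real_inner_self_eq_norm_sq, hq i hi]; norm_num
  have hSrec : ∀ j : ℕ, Svec m k h q (j + 1) = Svec m k h q j + seg m k q (h + j) := by
    intro j
    show q ((h + j + 1 : ℕ) : Fin (k + 1)) - q ((h - 1 : ℕ) : Fin (k + 1)) =
      (q ((h + j : ℕ) : Fin (k + 1)) - q ((h - 1 : ℕ) : Fin (k + 1))) +
        (q ((h + j + 1 : ℕ) : Fin (k + 1)) - q ((h + j : ℕ) : Fin (k + 1)))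
    abel
  have hS0 : Svec m k h q 0 = seg m k q (h - 1) := by
    have e : h - 1 + 1 = h + 0 := by omega
    show q ((h + 0 : ℕ) : Fin (k + 1)) - q ((h - 1 : ℕ) : Fin (k + 1)) =
      q ((h - 1 + 1 : ℕ) : Fin (k + 1)) - q ((h - 1 : ℕ) : Fin (k + 1))
    rw [e]
  have hSS : ∀ j, j ≤ l → (⟪Svec m k h q j, Svec m k h q j⟫ : ℝ) = (j : ℝ) + 1 := by
    intro j
    induction j with
    | zero =>
      intro _
      rw [hS0, hu1 (h - 1) (by omega)]; norm_num
    | succ n ih =>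
      intro hn
      have hzz : (⟪Svec m k h q n, seg m k q (h + n)⟫ : ℝ) = 0 := by
        rw [real_inner_comm]; exact horth n (by omega)
      rw [hSrec n, real_inner_add_add_self, ih (by omega), hzz, hu1 (h + n) (by omega)]
      push_cast; ring
  set Dmap : Tup m k →L[ℝ] ((Fin k → ℝ) × (Fin (l + 1) → ℝ)) :=
    (ContinuousLinearMap.pi fun i : Fin k => dpsi m k q (i : ℕ)).prod
      (ContinuousLinearMap.pi fun j : Fin (l + 1) => dphi m k h q (j : ℕ)) with hDmap
  refine ⟨Dmap, ?_, ?_⟩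
  · rw [hDmap]
    refine HasFDerivAt.prodMk ?_ ?_
    · exact hasFDerivAt_pi.2 fun i => hasFDerivAt_psi m k q (i : ℕ)
    · exact hasFDerivAt_pi.2 fun j => hasFDerivAt_phi m k h q (j : ℕ)
  · -- surjectivity
    set R : Submodule ℝ ((Fin k → ℝ) × (Fin (l + 1) → ℝ)) :=
      LinearMap.range (Dmap.toLinearMap) with hR
    have hmemD : ∀ v, Dmap v ∈ R := fun v => LinearMap.mem_range.2 ⟨v, rfl⟩
    have hC1 : ∀ (p : ℕ) (w : Vec m) (i : Fin k),
        (Dmap (delta m k p w)).1 i =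
          (if (i : ℕ) + 1 = p then 2 * ⟪seg m k q (i : ℕ), w⟫ else 0) -
            (if (i : ℕ) = p then 2 * ⟪seg m k q (i : ℕ), w⟫ else 0) := by
      intro p w i
      rw [hDmap]
      exact dpsi_delta m k q (i : ℕ) p (Nat.succ_lt_succ i.isLt) w
    have hC2 : ∀ (p : ℕ) (w : Vec m) (j : Fin (l + 1)),
        (Dmap (delta m k p w)).2 j =
          ((if h + (j : ℕ) + 1 = p then ⟪Svec m k h q (j : ℕ), w⟫ else 0) -
            (if h + (j : ℕ) = p then ⟪Svec m k h q (j : ℕ), w⟫ else 0)) +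
          ((if h + (j : ℕ) = p then ⟪seg m k q (h + (j : ℕ)), w⟫ else 0) -
            (if h - 1 = p then ⟪seg m k q (h + (j : ℕ)), w⟫ else 0)) := by
      intro p w j
      rw [hDmap]
      exact dphi_delta m k h q (j : ℕ) p (by have := j.isLt; omega) w
    -- Identity I1
    have I1 : Dmap (delta m k k (seg m k q (h + l))) =
        eps k l (h + l) (2 * ⟪seg m k q (h + l), seg m k q (h + l)⟫) := by
      refine Prod.ext (funext fun i' => ?_) (funext fun j' => ?_)
      · rw [hC1]
        simp only [eps]
        have hi := i'.isLt
        split_ifs <;>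
          first
            | ring1
            | contradiction
            | (exfalso; omega)
            | (rw [show ((i' : ℕ)) = h + l from by omega]; ring1)
      · rw [hC2]
        simp only [eps, Pi.zero_apply]
        have hj := j'.isLt
        split_ifs <;>
          first
            | ring1
            | contradiction
            | (exfalso; omega)
            | (rw [show ((j' : ℕ)) = l from by omega,
                real_inner_comm, horth l le_rfl]; ring1)
    -- Identity I2
    have I2 : Dmap (delta m k k (Svec m k h q l)) =
        eph k l l ⟪Svec m k h q l, Svec m k h q l⟫ := by
      refine Prod.ext (funext fun i' => ?_) (funext fun j' => ?_)
      · rw [hC1]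
        simp only [eph, Pi.zero_apply]
        have hi := i'.isLt
        split_ifs <;>
          first
            | ring1
            | contradiction
            | (exfalso; omega)
            | (rw [show ((i' : ℕ)) = h + l from by omega, horth l le_rfl]; ring1)
      · rw [hC2]
        simp only [eph]
        have hj := j'.isLt
        split_ifs <;>
          first
            | ring1
            | contradiction
            | (exfalso; omega)
            | (rw [show ((j' : ℕ)) = l from by omega]; ring1)
    -- Identity I3 (step, segment move)
    have I3 : ∀ j : ℕ, j < l →
        Dmap (delta m k (h + j + 1) (seg m k q (h + j))) =
          eps k l (h + j) (2 * ⟪seg m k q (h + j), seg m k q (h + j)⟫) +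
          eps k l (h + j + 1) (-(2 * ⟪seg m k q (h + j + 1), seg m k q (h + j)⟫)) +
          eph k l (j + 1) (⟪seg m k q (h + j + 1), seg m k q (h + j)⟫ -
            ⟪Svec m k h q (j + 1), seg m k q (h + j)⟫) := by
      intro j hjl
      refine Prod.ext (funext fun i' => ?_) (funext fun j' => ?_)
      · rw [hC1]
        simp only [eps, eph, Prod.fst_add, Pi.add_apply, Pi.zero_apply, add_zero]
        have hi := i'.isLt
        split_ifs <;>
          first
            | ring1
            | contradiction
            | (exfalso; omega)
            | (rw [show ((i' : ℕ)) = h + j from by omega]; ring1)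
            | (rw [show ((i' : ℕ)) = h + j + 1 from by omega]; ring1)
      · rw [hC2]
        simp only [eps, eph, Prod.snd_add, Pi.add_apply, Pi.zero_apply, zero_add]
        have hj := j'.isLt
        split_ifs <;>
          first
            | ring1
            | contradiction
            | (exfalso; omega)
            | (rw [show ((j' : ℕ)) = j from by omega,
                real_inner_comm, horth j (by omega)]; ring1)
            | (rw [show h + j + 1 = h + ((j' : ℕ)) from by omega,
                show j + 1 = ((j' : ℕ)) from by omega]; ring1)
    -- Identity I4 (step, Svec move)
    have I4 : ∀ j : ℕ, j < l →
        Dmap (delta m k (h + j + 1) (Svec m k h q j)) =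
          eps k l (h + j + 1) (-(2 * ⟪seg m k q (h + j + 1), Svec m k h q j⟫)) +
          eph k l j ⟪Svec m k h q j, Svec m k h q j⟫ +
          eph k l (j + 1) (⟪seg m k q (h + j + 1), Svec m k h q j⟫ -
            ⟪Svec m k h q (j + 1), Svec m k h q j⟫) := by
      intro j hjl
      refine Prod.ext (funext fun i' => ?_) (funext fun j' => ?_)
      · rw [hC1]
        simp only [eps, eph, Prod.fst_add, Pi.add_apply, Pi.zero_apply, add_zero]
        have hi := i'.isLt
        split_ifs <;>
          first
            | ring1
            | contradiction
            | (exfalso; omega)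
            | (rw [show ((i' : ℕ)) = h + j from by omega, horth j (by omega)]; ring1)
            | (rw [show ((i' : ℕ)) = h + j + 1 from by omega]; ring1)
      · rw [hC2]
        simp only [eps, eph, Prod.snd_add, Pi.add_apply, Pi.zero_apply, zero_add]
        have hj := j'.isLt
        split_ifs <;>
          first
            | ring1
            | contradiction
            | (exfalso; omega)
            | (rw [show ((j' : ℕ)) = j from by omega]; ring1)
            | (rw [show h + j + 1 = h + ((j' : ℕ)) from by omega,
                show j + 1 = ((j' : ℕ)) from by omega]; ring1)
    -- main induction: high indices
    have main : ∀ n : ℕ, ∀ j : ℕ, j ≤ l → l ≤ j + n →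
        eph k l j 1 ∈ R ∧ eps k l (h + j) 1 ∈ R := by
      intro n
      induction n with
      | zero =>
        intro j hj hj2
        have hjl : j = l := by omega
        rw [hjl]
        constructor
        · have hmm := hmemD (delta m k k (Svec m k h q l))
          rw [I2] at hmm
          exact eph_extract (by rw [hSS l le_rfl]; positivity) hmm
        · have hmm := hmemD (delta m k k (seg m k q (h + l)))
          rw [I1] at hmm
          exact eps_extract (by rw [hu1 (h + l) (by omega)]; norm_num) hmm
      | succ n ih =>
        intro j hj hj2
        by_cases hc : l ≤ j + n
        · exact ih j hj hc
        · have hjl : j < l := by omega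
          obtain ⟨ihφ, ihψ⟩ := ih (j + 1) (by omega) (by omega)
          have hψ : eps k l (h + j) 1 ∈ R := by
            have hmm := hmemD (delta m k (h + j + 1) (seg m k q (h + j)))
            rw [I3 j hjl] at hmm
            have hY : eps k l (h + j + 1)
                (-(2 * ⟪seg m k q (h + j + 1), seg m k q (h + j)⟫)) ∈ R := by
              rw [eps_smul]; exact R.smul_mem _ ihψ
            have hZ : eph k l (j + 1) (⟪seg m k q (h + j + 1), seg m k q (h + j)⟫ -
                ⟪Svec m k h q (j + 1), seg m k q (h + j)⟫) ∈ R := by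
              rw [eph_smul]; exact R.smul_mem _ ihφ
            exact eps_extract (by rw [hu1 (h + j) (by omega)]; norm_num)
              (mem_of_add3 hmm hY hZ)
          refine ⟨?_, hψ⟩
          have hmm := hmemD (delta m k (h + j + 1) (Svec m k h q j))
          rw [I4 j hjl] at hmm
          have hZ : eph k l (j + 1) (⟪seg m k q (h + j + 1), Svec m k h q j⟫ -
              ⟪Svec m k h q (j + 1), Svec m k h q j⟫) ∈ R := by
            rw [eph_smul]; exact R.smul_mem _ ihφ
          have hmm2 : eps k l (h + j + 1)
              (-(2 * ⟪seg m k q (h + j + 1), Svec m k h q j⟫)) +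
              eph k l j ⟪Svec m k h q j, Svec m k h q j⟫ ∈ R := mem_of_add2 hmm hZ
          have hY : eps k l (h + j + 1)
              (-(2 * ⟪seg m k q (h + j + 1), Svec m k h q j⟫)) ∈ R := by
            rw [eps_smul]; exact R.smul_mem _ ihψ
          have hX : eph k l j ⟪Svec m k h q j, Svec m k h q j⟫ ∈ R := by
            have := R.sub_mem hmm2 hY
            simpa using this
          exact eph_extract (by rw [hSS j (by omega)]; positivity) hX
    have hφall : ∀ j, j ≤ l → eph k l j 1 ∈ R := fun j hj => (main l j hj (by omega)).1
    have hψhigh : ∀ i, h ≤ i → i < k → eps k l i 1 ∈ R := by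
      intro i h1 h2
      have := (main l (i - h) (by omega) (by omega)).2
      rwa [show h + (i - h) = i from by omega] at this
    have hsnd : ∀ g : Fin (l + 1) → ℝ,
        ((0, g) : (Fin k → ℝ) × (Fin (l + 1) → ℝ)) ∈ R := by
      intro g
      have hrep : ((0, g) : (Fin k → ℝ) × (Fin (l + 1) → ℝ)) =
          ∑ j' : Fin (l + 1), g j' • eph k l (j' : ℕ) 1 := by
        refine Prod.ext ?_ ?_
        · rw [Prod.fst_sum]; simp [eph]
        · rw [Prod.snd_sum]
          funext j''
          rw [Finset.sum_apply]
          simp [eph, Fin.val_inj]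
      rw [hrep]
      exact Submodule.sum_mem R fun j' _ =>
        R.smul_mem _ (hφall (j' : ℕ) (Nat.lt_succ_iff.mp j'.isLt))
    -- low indices
    have I5 : Dmap (delta m k 0 (seg m k q 0)) =
        eps k l 0 (-(2 * ⟪seg m k q 0, seg m k q 0⟫)) +
        ((0 : Fin k → ℝ), fun j' : Fin (l + 1) =>
          -(if h - 1 = 0 then ⟪seg m k q (h + (j' : ℕ)), seg m k q 0⟫ else 0)) := by
      refine Prod.ext (funext fun i' => ?_) (funext fun j' => ?_)
      · rw [hC1]
        simp only [eps, Prod.fst_add, Pi.add_apply, Pi.zero_apply, add_zero]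
        have hi := i'.isLt
        split_ifs <;>
          first
            | ring1
            | contradiction
            | (exfalso; omega)
            | (rw [show ((i' : ℕ)) = 0 from by omega]; ring1)
      · rw [hC2]
        simp only [eps, Prod.snd_add, Pi.add_apply, Pi.zero_apply, zero_add]
        have hj := j'.isLt
        split_ifs <;> first | ring1 | contradiction | (exfalso; omega)
    have I6 : ∀ i : ℕ, i + 1 < h →
        Dmap (delta m k (i + 1) (seg m k q (i + 1))) =
          eps k l i (2 * ⟪seg m k q i, seg m k q (i + 1)⟫) +
          eps k l (i + 1) (-(2 * ⟪seg m k q (i + 1), seg m k q (i + 1)⟫)) +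
          ((0 : Fin k → ℝ), fun j' : Fin (l + 1) =>
            -(if h - 1 = i + 1 then ⟪seg m k q (h + (j' : ℕ)), seg m k q (i + 1)⟫ else 0)) := by
      intro i hih
      refine Prod.ext (funext fun i' => ?_) (funext fun j' => ?_)
      · rw [hC1]
        simp only [eps, Prod.fst_add, Pi.add_apply, Pi.zero_apply, add_zero]
        have hi := i'.isLt
        split_ifs <;>
          first
            | ring1
            | contradiction
            | (exfalso; omega)
            | (rw [show ((i' : ℕ)) = i from by omega]; ring1)
            | (rw [show ((i' : ℕ)) = i + 1 from by omega]; ring1)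
      · rw [hC2]
        simp only [eps, Prod.snd_add, Pi.add_apply, Pi.zero_apply, zero_add]
        have hj := j'.isLt
        split_ifs <;> first | ring1 | contradiction | (exfalso; omega)
    have hψlow : ∀ i, i < h → eps k l i 1 ∈ R := by
      intro i
      induction i with
      | zero =>
        intro _
        have hmm := hmemD (delta m k 0 (seg m k q 0))
        rw [I5] at hmm
        have hY := hsnd (fun j' : Fin (l + 1) =>
          -(if h - 1 = 0 then ⟪seg m k q (h + (j' : ℕ)), seg m k q 0⟫ else 0))
        exact eps_extract (by rw [hu1 0 (by omega)]; norm_num) (mem_of_add2 hmm hY)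
      | succ i ihi =>
        intro hih
        have hmm := hmemD (delta m k (i + 1) (seg m k q (i + 1)))
        rw [I6 i hih] at hmm
        have hZ := hsnd (fun j' : Fin (l + 1) =>
          -(if h - 1 = i + 1 then ⟪seg m k q (h + (j' : ℕ)), seg m k q (i + 1)⟫ else 0))
        have hY : eps k l i (2 * ⟪seg m k q i, seg m k q (i + 1)⟫) ∈ R := by
          rw [eps_smul]; exact R.smul_mem _ (ihi (by omega))
        have hmm2 := mem_of_add2 hmm hZ
        have hX : eps k l (i + 1) (-(2 * ⟪seg m k q (i + 1), seg m k q (i + 1)⟫)) ∈ R := by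
          have := R.sub_mem hmm2 hY
          simpa using this
        exact eps_extract (by rw [hu1 (i + 1) (by omega)]; norm_num) hX
    have hψall : ∀ i : ℕ, i < k → eps k l i 1 ∈ R := by
      intro i hi
      by_cases h' : i < h
      · exact hψlow i h'
      · exact hψhigh i (by omega) hi
    have hfst : ∀ g : Fin k → ℝ,
        ((g, 0) : (Fin k → ℝ) × (Fin (l + 1) → ℝ)) ∈ R := by
      intro g
      have hrep : ((g, 0) : (Fin k → ℝ) × (Fin (l + 1) → ℝ)) =
          ∑ i' : Fin k, g i' • eps k l (i' : ℕ) 1 := by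
        refine Prod.ext ?_ ?_
        · rw [Prod.fst_sum]
          funext i''
          rw [Finset.sum_apply]
          simp [eps, Fin.val_inj]
        · rw [Prod.snd_sum]; simp [eps]
      rw [hrep]
      exact Submodule.sum_mem R fun i' _ => R.smul_mem _ (hψall (i' : ℕ) i'.isLt)
    intro y
    have hy : y ∈ R := by
      have h1 := R.add_mem (hfst y.1) (hsnd y.2)
      simpa using h1
    rw [hR] at hy
    obtain ⟨v, hv⟩ := hy
    exact ⟨v, hv⟩

end ArticulatedArm
end
end

section
/- Fix integers h ≥ 1 and j ≥ 0 with h + j + 2 ≤ k, and define φ̄_{j'}(x) = ⟨x_{h+j'+1} − x_{h+j'}, x_{h+j'} − x_{h−1}⟩ for 0 ≤ j' ≤ j+1. Let q ∈ C^k(m) satisfy A_h(q) = 0 and φ̄_{j'}(q) = 0 for all 0 ≤ j' < j. Then the Fréchet derivative of φ̄_j at q applied to the vector Y_{h+j+2}(q) satisfies Dφ̄_j(q)[Y_{h+j+2}(q)] = −A_{h+j+1}(q)·φ̄_j(q) + φ̄_{j+1}(q). -/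
noncomputable section

open scoped RealInnerProductSpace

open Fin.NatCast

namespace ArticulatedArm

lemma Yt_apply (m k : ℕ) (x : Tup m k) (n : ℕ) (l : Fin (k+1)) :
    Yt m k x n l = if (l:ℕ) ∈ Finset.range n then
      (∏ j ∈ Finset.Ico ((l:ℕ)+1) n, Acoef m k x j) • seg m k x (l:ℕ) else 0 := by
  have h1 : Yt m k x n l
      = ∑ i ∈ Finset.range n, ((∏ j ∈ Finset.Ico (i+1) n, Acoef m k x j) • Zt m k x i) l :=
    by rw [Yt, WithLp.ofLp_sum]; exact Finset.sum_apply l _ _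
  have h2 : ∀ i, ((∏ j ∈ Finset.Ico (i+1) n, Acoef m k x j) • Zt m k x i) l
      = if (l:ℕ) = i then (∏ j ∈ Finset.Ico (i+1) n, Acoef m k x j) • seg m k x i else 0 := by
    intro i
    have : ((∏ j ∈ Finset.Ico (i+1) n, Acoef m k x j) • Zt m k x i) l
        = (∏ j ∈ Finset.Ico (i+1) n, Acoef m k x j) • (Zt m k x i l) := rfl
    rw [this, Zt, PiLp.toLp_apply, smul_ite, smul_zero]
  rw [h1, Finset.sum_congr rfl (fun i _ => h2 i), Finset.sum_ite_eq]


/-- with `φ̄_{j'}(x) = ⟨x_{h+j'+1} - x_{h+j'}, x_{h+j'} - x_{h-1}⟩`, if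
`q ∈ C^k(m)` satisfies `A_h(q) = 0` and `φ̄_{j'}(q) = 0` for all `j' < j`, then
`Dφ̄_j(q)[Y_{h+j+2}(q)] = -A_{h+j+1}(q)·φ̄_j(q) + φ̄_{j+1}(q)`. -/
theorem statement15 (m k h j : ℕ) (hm : 2 ≤ m) (hh : 1 ≤ h) (hk : h + j + 2 ≤ k) :
    let phibar : ℕ → Tup m k → ℝ := fun j' x =>
      ⟪x ((h + j' + 1 : ℕ) : Fin (k + 1)) - x ((h + j' : ℕ) : Fin (k + 1)),
        x ((h + j' : ℕ) : Fin (k + 1)) - x ((h - 1 : ℕ) : Fin (k + 1))⟫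
    ∀ q ∈ Conf m k, Acoef m k q h = 0 → (∀ j', j' < j → phibar j' q = 0) →
      ∃ D : Tup m k →L[ℝ] ℝ, HasFDerivAt (phibar j) D q ∧
        D (Yt m k q (h + j + 2)) =
          -(Acoef m k q (h + j + 1)) * phibar j q + phibar (j + 1) q := by
  intro phibar q hq hA _hprev
  classical
  -- continuous linear evaluation maps
  let E : Tup m k →L[ℝ] (Fin (k+1) → Vec m) :=
    (PiLp.continuousLinearEquiv 2 ℝ (fun _ : Fin (k + 1) => Vec m)).toContinuousLinearMap
  let ev : ℕ → (Tup m k →L[ℝ] Vec m) := fun i =>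
    (ContinuousLinearMap.proj ((i : ℕ) : Fin (k+1))).comp E
  have hev : ∀ (i : ℕ) (x : Tup m k), ev i x = x ((i : ℕ) : Fin (k+1)) := fun _ _ => rfl
  let f : Tup m k →L[ℝ] Vec m := ev (h + j + 1) - ev (h + j)
  let g : Tup m k →L[ℝ] Vec m := ev (h + j) - ev (h - 1)
  have hf : HasFDerivAt (fun x : Tup m k => f x) f q := f.hasFDerivAt
  have hg : HasFDerivAt (fun x : Tup m k => g x) g q := g.hasFDerivAt
  have hD := hf.inner ℝ hg
  refine ⟨_, hD, ?_⟩
  -- compute components of Y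
  set n := h + j + 2 with hn
  set v := Yt m k q n with hv
  have hlt : ∀ i : ℕ, i < k + 1 → ((((i:ℕ) : Fin (k+1)) : ℕ) = i) := fun i hi =>
    Fin.val_cast_of_lt hi
  have hv1 : v ((h + j + 1 : ℕ) : Fin (k+1)) = seg m k q (h + j + 1) := by
    rw [hv, Yt_apply]
    rw [hlt (h+j+1) (by omega)]
    simp [hn, Finset.mem_range]
  have hv0 : v ((h + j : ℕ) : Fin (k+1)) = Acoef m k q (h + j + 1) • seg m k q (h + j) := by
    rw [hv, Yt_apply]
    rw [hlt (h+j) (by omega)]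
    rw [if_pos (Finset.mem_range.mpr (by omega))]
    congr 1
    rw [show Finset.Ico (h + j + 1) n = {h + j + 1} by
      rw [hn]; exact Nat.Ico_succ_singleton _]
    simp
  have hva : v ((h - 1 : ℕ) : Fin (k+1)) = 0 := by
    rw [hv, Yt_apply]
    rw [hlt (h-1) (by omega)]
    rw [if_pos (Finset.mem_range.mpr (by omega))]
    rw [Finset.prod_eq_zero (i := h) (by simp [hn, Finset.mem_Ico]; omega) hA, zero_smul]
  -- evaluate the derivative
  have hfq : f q = seg m k q (h + j) := rfl
  have hgq : g q = q ((h + j : ℕ) : Fin (k+1)) - q ((h - 1 : ℕ) : Fin (k+1)) := rfl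
  have hDv : (fderivInnerCLM ℝ (f q, g q)).comp (f.prod g) v
      = ⟪f q, g v⟫ + ⟪f v, g q⟫ := by
    rw [ContinuousLinearMap.comp_apply, fderivInnerCLM_apply]
    rfl
  rw [hDv]
  have hfv : f v = seg m k q (h + j + 1) - Acoef m k q (h + j + 1) • seg m k q (h + j) := by
    show v ((h + j + 1 : ℕ) : Fin (k+1)) - v ((h + j : ℕ) : Fin (k+1)) = _
    rw [hv1, hv0]
  have hgv : g v = Acoef m k q (h + j + 1) • seg m k q (h + j) := by
    show v ((h + j : ℕ) : Fin (k+1)) - v ((h - 1 : ℕ) : Fin (k+1)) = _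
    rw [hv0, hva, sub_zero]
  rw [hfv, hgv, hfq, hgq]
  -- now pure inner-product algebra
  have hnorm : ‖seg m k q (h + j)‖ = 1 := hq (h + j) (by omega)
  have hA1 : Acoef m k q (h + j + 1) = ⟪seg m k q (h + j + 1), seg m k q (h + j)⟫ := by
    rw [Acoef, AA]; norm_num
  have hphi1 : phibar (j + 1) q
      = ⟪seg m k q (h + j + 1), q ((h + j : ℕ) : Fin (k+1)) - q ((h - 1 : ℕ) : Fin (k+1))⟫
        + Acoef m k q (h + j + 1) := by
    show (⟪q ((h + (j+1) + 1 : ℕ) : Fin (k+1)) - q ((h + (j+1) : ℕ) : Fin (k+1)),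
        q ((h + (j+1) : ℕ) : Fin (k+1)) - q ((h - 1 : ℕ) : Fin (k+1))⟫ : ℝ) = _
    have e1 : h + (j + 1) + 1 = h + j + 1 + 1 := by omega
    have e2 : h + (j + 1) = h + j + 1 := by omega
    rw [e1, e2, hA1]
    rw [show (q ((h + j + 1 + 1 : ℕ) : Fin (k+1)) - q ((h + j + 1 : ℕ) : Fin (k+1)))
        = seg m k q (h + j + 1) from rfl]
    rw [show (q ((h + j + 1 : ℕ) : Fin (k+1)) - q ((h - 1 : ℕ) : Fin (k+1)))
        = (q ((h + j : ℕ) : Fin (k+1)) - q ((h - 1 : ℕ) : Fin (k+1))) + seg m k q (h + j) by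
      rw [seg]; abel]
    rw [inner_add_right]
  have hphij : phibar j q
      = ⟪seg m k q (h + j), q ((h + j : ℕ) : Fin (k+1)) - q ((h - 1 : ℕ) : Fin (k+1))⟫ := rfl
  rw [hphi1, hphij]
  rw [inner_smul_right, inner_sub_left, real_inner_smul_left, real_inner_self_eq_norm_sq, hnorm]
  ring

end ArticulatedArm
end
end

section
/- Let l ≥ 2, let q = (x_0, …, x_l) ∈ C^l(m), set q' = (x_0, …, x_{l−1}) ∈ C^{l−1}(m) and z = x_l − x_{l−1} ∈ S^m. In (ℝ^{m+1})^l, let v_r(q') = (x_{l−1}^r − x_{l−2}^r)·Y_{l−1}(q') + e_r^{(l−1)} (r = 1, …, m+1) and let w = Σ_{r=1}^{m+1} z^r · v_r(q'). Then w lies in the vertical subspace L_{l−1}(q') = { v ∈ (ℝ^{m+1})^l : v is supported in the (l−1)-th component and its (l−1)-th component is orthogonal to x_{l−1} − x_{l−2} } if and only if A_{l−1}(q) = ⟨x_l − x_{l−1}, x_{l−1} − x_{l−2}⟩ = 0, i.e. if and only if the segments [x_{l−2}, x_{l−1}] and [x_{l−1}, x_l] of the articulated arm are orthogonal at x_{l−1}.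 -/
noncomputable section

open scoped RealInnerProductSpace

open Fin.NatCast

namespace ArticulatedArm

/-- for `l = n + 2 ≥ 2`, `q = (x_0,…,x_l) ∈ C^l(m)`, `q' = (x_0,…,x_{l-1})`,
`z = x_l - x_{l-1} ∈ S^m`, `v_r(q') = (x_{l-1}^r - x_{l-2}^r)·Y_{l-1}(q') + e_r^{(l-1)}`, and
`w = Σ_r z^r·v_r(q')`, the vector `w` lies in the vertical subspace `L_{l-1}(q')` if and only
if `A_{l-1}(q) = ⟨x_l - x_{l-1}, x_{l-1} - x_{l-2}⟩ = 0`, i.e. iff the segments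
`[x_{l-2}, x_{l-1}]` and `[x_{l-1}, x_l]` of the articulated arm are orthogonal at
`x_{l-1}`. -/
theorem statement18 (m n : ℕ) (hm : 2 ≤ m)
    (q : Tup m (n + 2)) (hq : q ∈ Conf m (n + 2)) :
    let q' : Tup m (n + 1) := WithLp.toLp 2 (fun i : Fin (n + 2) => q (Fin.castSucc i))
    let z : Vec m := q ((n + 2 : ℕ) : Fin (n + 3)) - q ((n + 1 : ℕ) : Fin (n + 3))
    let v : Fin (m + 1) → Tup m (n + 1) :=
      fun r => (seg m (n + 1) q' n r) • Yt m (n + 1) q' (n + 1) + et m (n + 1) (n + 1) r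
    let w : Tup m (n + 1) := ∑ r : Fin (m + 1), (z r) • v r
    ((∀ l : Fin (n + 2), (l : ℕ) ≠ n + 1 → w l = 0) ∧
        ⟪w ((n + 1 : ℕ) : Fin (n + 2)), seg m (n + 1) q' n⟫ = 0) ↔
      ⟪z, seg m (n + 1) q' n⟫ = 0 := by
  intro q' z v w
  set s : Vec m := seg m (n + 1) q' n with hs
  have hval : (((n + 1 : ℕ) : Fin (n + 2)) : ℕ) = n + 1 :=
    Fin.val_cast_of_lt (by omega)
  have hwl : ∀ l : Fin (n + 2),
      w l = ∑ r : Fin (m + 1), z r • (s r • Yt m (n + 1) q' (n + 1) l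
        + et m (n + 1) (n + 1) r l) := by
    intro l
    show (∑ r : Fin (m + 1), z r • v r) l = _
    rw [WithLp.ofLp_sum, Finset.sum_apply l Finset.univ fun r => (z r • v r).ofLp]
    rfl
  have hinner : ⟪z, s⟫ = ∑ r : Fin (m + 1), z r * s r := by
    simp [PiLp.inner_apply, RCLike.inner_apply, mul_comm]
  have hwcomp : ∀ l : Fin (n + 2), (l : ℕ) ≠ n + 1 →
      w l = ⟪z, s⟫ • Yt m (n + 1) q' (n + 1) l := by
    intro l hl
    rw [hwl l, hinner]
    have he : ∀ r : Fin (m + 1), et m (n + 1) (n + 1) r l = 0 := by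
      intro r; simp [et, hl]
    simp only [he, add_zero, smul_smul, Finset.sum_smul]
  have hwtop : w ((n + 1 : ℕ) : Fin (n + 2)) = z := by
    rw [hwl]
    have hY : Yt m (n + 1) q' (n + 1) ((n + 1 : ℕ) : Fin (n + 2)) = 0 := by
      show (∑ i ∈ Finset.range (n + 1),
          (∏ j ∈ Finset.Ico (i + 1) (n + 1), Acoef m (n + 1) q' j)
            • Zt m (n + 1) q' i) ((n + 1 : ℕ) : Fin (n + 2)) = 0
      rw [WithLp.ofLp_sum, Finset.sum_apply]
      apply Finset.sum_eq_zero
      intro i hi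
      rw [Finset.mem_range] at hi
      simp only [PiLp.smul_apply, Zt]
      rw [if_neg (by rw [hval]; omega), smul_zero]
    rw [hY]
    simp only [smul_zero, zero_add]
    have he : ∀ r : Fin (m + 1),
        et m (n + 1) (n + 1) r ((n + 1 : ℕ) : Fin (n + 2))
          = EuclideanSpace.single r (1 : ℝ) := by
      intro r
      show (if (((n + 1 : ℕ) : Fin (n + 2)) : ℕ) = n + 1
        then EuclideanSpace.single r (1 : ℝ) else 0) = _
      rw [if_pos hval]
    simp only [he]
    ext j
    rw [WithLp.ofLp_sum, Finset.sum_apply]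
    simp only [PiLp.smul_apply, EuclideanSpace.single_apply,
      smul_eq_mul, mul_ite, mul_one, mul_zero]
    simp
  constructor
  · rintro ⟨_, h2⟩
    rw [hwtop] at h2
    exact h2
  · intro h
    refine ⟨fun l hl => ?_, ?_⟩
    · rw [hwcomp l hl, h, zero_smul]
    · rw [hwtop]; exact h

end ArticulatedArm
end
end
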